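/- A priori estimate for the model operator N₁ at the ODE level: let ξ ∈ ℝ, T > 0, and let v : ℝ → ℂ be a C¹ function supported in [-T/2, T/2]. Set (L v)(t) = v'(t) - t|ξ| v(t) (which is i times the symbol-level operator D_t + it|ξ|). Then T · ‖Lv‖_{L²(ℝ)} ≥ ‖v‖_{L²(ℝ)}. -/

import Mathlib

open MeasureTheory
open scoped ENNReal

/-- A priori estimate for the model operator `N₁` at the ODE level: if
`v : ℝ → ℂ` is `C¹` and supported in `[-T/2, T/2]`, and
`(L v) t = v' t - t |ξ| v t`, then `T · ‖Lv‖_{L²} ≥ ‖v‖_{L²}`. -/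
theorem stmt_4 (ξ T : ℝ) (hT : 0 < T) (v : ℝ → ℂ)
    (hv : ContDiff ℝ 1 v)
    (hsupp : Function.support v ⊆ Set.Icc (-T / 2) (T / 2)) :
    eLpNorm v 2 volume ≤
      ENNReal.ofReal T *
        eLpNorm (fun t => deriv v t - (t * |ξ| : ℝ) * v t) 2 volume := by
  set c : ℝ := |ξ| with hc
  have hc0 : 0 ≤ c := abs_nonneg ξ
  set w : ℝ → ℂ := fun t => deriv v t - (t * c : ℝ) * v t with hwdef
  have hvc : Continuous v := hv.continuous
  have hdv : Continuous (deriv v) := hv.continuous_deriv le_rfl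
  have hw : Continuous w := by
    apply hdv.sub
    exact (Complex.continuous_ofReal.comp (continuous_id.mul continuous_const)).mul hvc
  set E : ℝ → ℝ := fun t => Real.exp (-(t ^ 2 * c) / 2) with hE
  have hEc : Continuous E := by
    apply Real.continuous_exp.comp
    continuity
  set u : ℝ → ℂ := fun t => (E t : ℂ) * v t with hu
  have hu_deriv : ∀ t, HasDerivAt u ((E t : ℂ) * w t) t := by
    intro t
    have h1 : HasDerivAt (fun t : ℝ => -(t ^ 2 * c) / 2) (-(t * c)) t := by
      have h : HasDerivAt (fun t : ℝ => t ^ 2) (2 * t) t := by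
        simpa using hasDerivAt_pow 2 t
      have : HasDerivAt (fun t : ℝ => -(t ^ 2 * c) / 2) (-(2 * t * c) / 2) t :=
        ((h.mul_const c).neg).div_const 2
      convert this using 1
      ring
    have h2 : HasDerivAt E (E t * (-(t * c))) t := h1.exp
    have h3 : HasDerivAt (fun s => ((E s : ℝ) : ℂ)) ((E t * (-(t * c)) : ℝ) : ℂ) t :=
      h2.ofReal_comp
    have h4 : HasDerivAt v (deriv v t) t :=
      ((hv.differentiable one_ne_zero) t).hasDerivAt
    have : HasDerivAt u ((E t * (-(t * c)) : ℝ) * v t + (E t : ℂ) * deriv v t) t :=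
      h3.mul h4
    convert this using 1
    simp only [hwdef]
    push_cast
    ring
  have hint : ∀ a b : ℝ, IntervalIntegrable (fun s => (E s : ℂ) * w s) volume a b :=
    fun a b => ((Complex.continuous_ofReal.comp hEc).mul hw).intervalIntegrable a b
  have key : ∀ a b : ℝ, ∫ s in a..b, (E s : ℂ) * w s = u b - u a := fun a b =>
    intervalIntegral.integral_eq_sub_of_hasDerivAt (fun x _ => hu_deriv x) (hint a b)
  -- boundary values vanish
  have hzero : ∀ t : ℝ, t ∉ Set.Icc (-T / 2) (T / 2) → v t = 0 := by
    intro t ht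
    by_contra h
    exact ht (hsupp h)
  have hva : v (-T / 2) = 0 := by
    have h1 : Filter.Tendsto v (nhdsWithin (-T / 2) (Set.Iio (-T / 2))) (nhds (v (-T / 2))) :=
      (hvc.tendsto _).mono_left nhdsWithin_le_nhds
    have h2 : Filter.Tendsto v (nhdsWithin (-T / 2) (Set.Iio (-T / 2))) (nhds 0) := by
      apply Filter.Tendsto.congr' _ tendsto_const_nhds
      filter_upwards [self_mem_nhdsWithin] with s hs
      exact (hzero s (fun hmem => absurd hmem.1 (not_le.mpr hs))).symm
    exact tendsto_nhds_unique h1 h2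
  have hvb : v (T / 2) = 0 := by
    have h1 : Filter.Tendsto v (nhdsWithin (T / 2) (Set.Ioi (T / 2))) (nhds (v (T / 2))) :=
      (hvc.tendsto _).mono_left nhdsWithin_le_nhds
    have h2 : Filter.Tendsto v (nhdsWithin (T / 2) (Set.Ioi (T / 2))) (nhds 0) := by
      apply Filter.Tendsto.congr' _ tendsto_const_nhds
      filter_upwards [self_mem_nhdsWithin] with s hs
      exact (hzero s (fun hmem => absurd hmem.2 (not_le.mpr hs))).symm
    exact tendsto_nhds_unique h1 h2
  have hab : (-T / 2 : ℝ) ≤ T / 2 := by linarith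
  set M : ℝ := ∫ s in (-T / 2)..(T / 2), ‖w s‖ with hM
  have hwn : Continuous fun s => ‖w s‖ := hw.norm
  have hM0 : 0 ≤ M :=
    intervalIntegral.integral_nonneg hab (fun s _ => norm_nonneg _)
  -- pointwise bound
  have hpt : ∀ t : ℝ, ‖v t‖ ≤ M := by
    intro t
    by_cases ht : t ∈ Set.Icc (-T / 2) (T / 2)
    · have hnorm_u : ‖u t‖ = E t * ‖v t‖ := by
        simp [hu, norm_mul, Complex.norm_real, abs_of_pos (Real.exp_pos _)]
        exact Or.inl (Real.exp_pos _).le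
      rcases le_or_gt t 0 with h0t | h0t
      · -- left side
        have h1 : -T / 2 ≤ t := ht.1
        have e1 : u t = ∫ s in (-T / 2)..t, (E s : ℂ) * w s := by
          rw [key]
          simp [hu, hva]
        have e2 : ‖u t‖ ≤ ∫ s in (-T / 2)..t, ‖(E s : ℂ) * w s‖ := by
          rw [e1]
          exact intervalIntegral.norm_integral_le_integral_norm h1
        have e3 : (∫ s in (-T / 2)..t, ‖(E s : ℂ) * w s‖)
            ≤ ∫ s in (-T / 2)..t, E t * ‖w s‖ := by
          apply intervalIntegral.integral_mono_on h1
          · exact (((Complex.continuous_ofReal.comp hEc).mul hw).norm).intervalIntegrable _ _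
          · exact (continuous_const.mul hwn).intervalIntegrable _ _
          · intro s hs
            have hEle : E s ≤ E t := by
              apply Real.exp_le_exp.mpr
              have : t ^ 2 ≤ s ^ 2 := by nlinarith [hs.1, hs.2]
              nlinarith
            calc ‖(E s : ℂ) * w s‖ = E s * ‖w s‖ := by
                  simp [norm_mul, Complex.norm_real, abs_of_pos (Real.exp_pos _)]
                  exact Or.inl (Real.exp_pos _).le
              _ ≤ E t * ‖w s‖ := mul_le_mul_of_nonneg_right hEle (norm_nonneg _)
        rw [intervalIntegral.integral_const_mul] at e3
        have e5 : ‖v t‖ ≤ ∫ s in (-T / 2)..t, ‖w s‖ := by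
          have := (hnorm_u ▸ e2).trans e3
          exact le_of_mul_le_mul_left this (Real.exp_pos _)
        refine e5.trans ?_
        exact intervalIntegral.integral_mono_interval le_rfl h1 ht.2
          (Filter.Eventually.of_forall fun s => norm_nonneg _)
          (hwn.intervalIntegrable _ _)
      · -- right side
        have h1 : t ≤ T / 2 := ht.2
        have e1 : -u t = ∫ s in t..(T / 2), (E s : ℂ) * w s := by
          rw [key]
          simp [hu, hvb]
        have e2 : ‖u t‖ ≤ ∫ s in t..(T / 2), ‖(E s : ℂ) * w s‖ := by
          rw [← norm_neg, e1]
          exact intervalIntegral.norm_integral_le_integral_norm h1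
        have e3 : (∫ s in t..(T / 2), ‖(E s : ℂ) * w s‖)
            ≤ ∫ s in t..(T / 2), E t * ‖w s‖ := by
          apply intervalIntegral.integral_mono_on h1
          · exact (((Complex.continuous_ofReal.comp hEc).mul hw).norm).intervalIntegrable _ _
          · exact (continuous_const.mul hwn).intervalIntegrable _ _
          · intro s hs
            have hEle : E s ≤ E t := by
              apply Real.exp_le_exp.mpr
              have : t ^ 2 ≤ s ^ 2 := by nlinarith [hs.1, hs.2]
              nlinarith
            calc ‖(E s : ℂ) * w s‖ = E s * ‖w s‖ := by
                  simp [norm_mul, Complex.norm_real, abs_of_pos (Real.exp_pos _)]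
                  exact Or.inl (Real.exp_pos _).le
              _ ≤ E t * ‖w s‖ := mul_le_mul_of_nonneg_right hEle (norm_nonneg _)
        rw [intervalIntegral.integral_const_mul] at e3
        have e5 : ‖v t‖ ≤ ∫ s in t..(T / 2), ‖w s‖ := by
          have := (hnorm_u ▸ e2).trans e3
          exact le_of_mul_le_mul_left this (Real.exp_pos _)
        refine e5.trans ?_
        exact intervalIntegral.integral_mono_interval ht.1 h1 le_rfl
          (Filter.Eventually.of_forall fun s => norm_nonneg _)
          (hwn.intervalIntegrable _ _)
    · rw [hzero t ht]
      simpa using hM0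
  -- L² step
  set S : Set ℝ := Set.Icc (-T / 2) (T / 2) with hS
  have hSm : MeasurableSet S := measurableSet_Icc
  have hvol : volume S = ENNReal.ofReal T := by
    rw [hS, Real.volume_Icc]
    congr 1
    ring
  have hv_ind : S.indicator v = v := Set.indicator_eq_self.mpr hsupp
  have step1 : eLpNorm v 2 volume
      ≤ ENNReal.ofReal T ^ ((2 : ℝ)⁻¹) * ENNReal.ofReal M := by
    calc eLpNorm v 2 volume = eLpNorm (S.indicator v) 2 volume := by rw [hv_ind]
      _ = eLpNorm v 2 (volume.restrict S) := eLpNorm_indicator_eq_eLpNorm_restrict hSm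
      _ ≤ (volume.restrict S) Set.univ ^ ((2 : ℝ≥0∞).toReal)⁻¹ * ENNReal.ofReal M :=
          eLpNorm_le_of_ae_bound (Filter.Eventually.of_forall hpt)
      _ = ENNReal.ofReal T ^ ((2 : ℝ)⁻¹) * ENNReal.ofReal M := by
          rw [Measure.restrict_apply_univ, hvol]
          norm_num
  have hwint : IntegrableOn (fun s => ‖w s‖) S volume :=
    (hwn.integrableOn_Icc)
  have step2 : ENNReal.ofReal M
      ≤ eLpNorm w 2 volume * ENNReal.ofReal T ^ ((2 : ℝ)⁻¹) := by
    have e0 : ENNReal.ofReal M ≤ ∫⁻ s in S, ‖w s‖₊ ∂volume := by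
      rw [hM, intervalIntegral.integral_of_le hab]
      have hIoc : IntegrableOn (fun s => ‖w s‖) (Set.Ioc (-T / 2) (T / 2)) volume :=
        hwint.mono_set Set.Ioc_subset_Icc_self
      rw [ofReal_integral_eq_lintegral_ofReal hIoc
        (Filter.Eventually.of_forall fun s => norm_nonneg _)]
      simp_rw [ofReal_norm_eq_enorm]
      exact lintegral_mono_set Set.Ioc_subset_Icc_self
    have e1 : (∫⁻ s in S, ‖w s‖₊ ∂volume) = eLpNorm w 1 (volume.restrict S) := by
      rw [eLpNorm_one_eq_lintegral_enorm]
      simp only [enorm_eq_nnnorm]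
    have e2 : eLpNorm w 1 (volume.restrict S)
        ≤ eLpNorm w 2 (volume.restrict S) * ((volume.restrict S) Set.univ) ^ ((1 : ℝ) - 1 / 2) := by
      have := eLpNorm_le_eLpNorm_mul_rpow_measure_univ (μ := volume.restrict S)
        (p := 1) (q := 2) (f := w) (by norm_num)
        (hw.aestronglyMeasurable)
      convert this using 2
      norm_num
    have e3 : eLpNorm w 2 (volume.restrict S) ≤ eLpNorm w 2 volume :=
      eLpNorm_mono_measure w Measure.restrict_le_self
    calc ENNReal.ofReal M ≤ eLpNorm w 1 (volume.restrict S) := e0.trans_eq e1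
      _ ≤ eLpNorm w 2 (volume.restrict S) * ((volume.restrict S) Set.univ) ^ ((1 : ℝ) - 1 / 2) := e2
      _ ≤ eLpNorm w 2 volume * ENNReal.ofReal T ^ ((2 : ℝ)⁻¹) := by
          have hexp : (1 : ℝ) - 1 / 2 = (2 : ℝ)⁻¹ := by norm_num
          rw [Measure.restrict_apply_univ, hvol, hexp]
          exact mul_le_mul_left e3 _
  calc eLpNorm v 2 volume ≤ ENNReal.ofReal T ^ ((2 : ℝ)⁻¹) * ENNReal.ofReal M := step1
    _ ≤ ENNReal.ofReal T ^ ((2 : ℝ)⁻¹) * (eLpNorm w 2 volume * ENNReal.ofReal T ^ ((2 : ℝ)⁻¹)) := by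
        gcongr
    _ = (ENNReal.ofReal T ^ ((2 : ℝ)⁻¹) * ENNReal.ofReal T ^ ((2 : ℝ)⁻¹)) * eLpNorm w 2 volume := by
        ring
    _ = ENNReal.ofReal T * eLpNorm w 2 volume := by
        rw [← ENNReal.rpow_add _ _ (ENNReal.ofReal_pos.mpr hT).ne' ENNReal.ofReal_ne_top]
        norm_num
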